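/- arXiv:1805.08134 — 2 statements merged into one kernel-verified Lean document; each statement's English description precedes it below -/
import Mathlib

section
/- Assume the Unique Minimizer assumption. Then V*(λ*) = φ(S*)², and for every λ ∈ Δ with λ ≠ λ* one has V*(λ) > φ(S*)²; that is, λ* is the unique minimizer of the asymptotic posterior variance V* over the simplex Δ. -/
open Matrix Finset Filter Topology

noncomputable section

namespace LearningTraps

variable {K N : ℕ}

/-- The information matrix `Σᵢ qᵢ · cᵢ cᵢᵀ`. -/
def infoMat (c : Fin N → Fin K → ℝ) (q : Fin N → ℝ) : Matrix (Fin K) (Fin K) ℝ :=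
  ∑ i, q i • Matrix.vecMulVec (c i) (c i)

/-- Posterior variance `V_Σ(q) = [(Σ⁻¹ + Σᵢ qᵢ cᵢcᵢᵀ)⁻¹]₁₁`. -/
def postVar (hK : 0 < K) (c : Fin N → Fin K → ℝ)
    (Cov : Matrix (Fin K) (Fin K) ℝ) (q : Fin N → ℝ) : ℝ :=
  (Cov⁻¹ + infoMat c q)⁻¹ ⟨0, hK⟩ ⟨0, hK⟩

/-- Posterior variance at integer signal counts. -/
def pv (hK : 0 < K) (c : Fin N → Fin K → ℝ)
    (Cov : Matrix (Fin K) (Fin K) ℝ) (q : Fin N → ℕ) : ℝ :=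
  postVar hK c Cov fun i => (q i : ℝ)

/-- First standard basis vector of `ℝ^K`. -/
def e1 (hK : 0 < K) : Fin K → ℝ := Pi.single ⟨0, hK⟩ 1

/-- `S` is spanning: `e₁` lies in the span of `{cᵢ : i ∈ S}`. -/
def Spanning (hK : 0 < K) (c : Fin N → Fin K → ℝ) (S : Finset (Fin N)) : Prop :=
  e1 hK ∈ Submodule.span ℝ (c '' ↑S)

/-- `S` is minimally spanning. -/
def MinSpanning (hK : 0 < K) (c : Fin N → Fin K → ℝ) (S : Finset (Fin N)) : Prop :=
  Spanning hK c S ∧ ∀ T ⊂ S, ¬ Spanning hK c T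

/-- `β` represents `e₁` using only signals in `S`. -/
def IsRep (hK : 0 < K) (c : Fin N → Fin K → ℝ) (S : Finset (Fin N)) (β : Fin N → ℝ) : Prop :=
  (∀ i ∉ S, β i = 0) ∧ ∑ i, β i • c i = e1 hK

open Classical in
/-- The coefficients `β^S` (unique when `S` is minimally spanning). -/
def betaVec (hK : 0 < K) (c : Fin N → Fin K → ℝ) (S : Finset (Fin N)) : Fin N → ℝ :=
  if h : ∃ β, IsRep hK c S β then h.choose else 0

/-- `φ(S) = Σ_{i∈S} |β^S_i|`. -/
def phi (hK : 0 < K) (c : Fin N → Fin K → ℝ) (S : Finset (Fin N)) : ℝ :=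
  ∑ i, |betaVec hK c S i|

/-- The frequency vector `λ^S`. -/
def freq (hK : 0 < K) (c : Fin N → Fin K → ℝ) (S : Finset (Fin N)) : Fin N → ℝ :=
  fun i => |betaVec hK c S i| / phi hK c S

/-- The Unique Minimizer assumption: `Sstar` is the unique minimizer of `φ`
among minimally spanning sets. -/
def UniqueMin (hK : 0 < K) (c : Fin N → Fin K → ℝ) (Sstar : Finset (Fin N)) : Prop :=
  MinSpanning hK c Sstar ∧
    ∀ S, MinSpanning hK c S → S ≠ Sstar → phi hK c Sstar < phi hK c S

/-- A `t`-optimal division of observations. -/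
def TOptimal (hK : 0 < K) (c : Fin N → Fin K → ℝ) (Cov : Matrix (Fin K) (Fin K) ℝ)
    (t : ℕ) (q : Fin N → ℕ) : Prop :=
  (∑ i, q i) = t ∧ ∀ q' : Fin N → ℕ, (∑ i, q' i) = t → pv hK c Cov q ≤ pv hK c Cov q'

/-- A greedy (myopic) acquisition sequence. -/
def Greedy (hK : 0 < K) (c : Fin N → Fin K → ℝ) (Cov : Matrix (Fin K) (Fin K) ℝ)
    (m : ℕ → Fin N → ℕ) : Prop :=
  m 0 = 0 ∧ ∀ t, ∃ i, m (t + 1) = m t + Pi.single i 1 ∧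
    ∀ j, pv hK c Cov (m t + Pi.single i 1) ≤ pv hK c Cov (m t + Pi.single j 1)

open Classical in
/-- The set `A̅` of all signals whose coefficient vector lies in the span of `{cⱼ : j ∈ A}`. -/
def subClosure (c : Fin N → Fin K → ℝ) (A : Finset (Fin N)) : Finset (Fin N) :=
  Finset.univ.filter fun i => c i ∈ Submodule.span ℝ (c '' ↑A)

/-- `S` is subspace-optimal: it uniquely minimizes `φ` among minimally spanning subsets
of its own subspace closure. -/
def SubspaceOptimal (hK : 0 < K) (c : Fin N → Fin K → ℝ) (S : Finset (Fin N)) : Prop :=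
  MinSpanning hK c S ∧
    ∀ T ⊆ subClosure c S, MinSpanning hK c T → T ≠ S → phi hK c S < phi hK c T

/-- The asymptotic posterior variance `V*`, valued in `[0,∞]`. -/
def Vstar (hK : 0 < K) (c : Fin N → Fin K → ℝ) (l : Fin N → ℝ) : ENNReal :=
  ⨆ (ε : ℝ) (_ : 0 < ε),
    ENNReal.ofReal ((infoMat c l + ε • (1 : Matrix (Fin K) (Fin K) ℝ))⁻¹ ⟨0, hK⟩ ⟨0, hK⟩)

section Aux

lemma infoMat_apply (c : Fin N → Fin K → ℝ) (l : Fin N → ℝ) (j k : Fin K) :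
    infoMat c l j k = ∑ i, l i * (c i j * c i k) := by
  simp [infoMat, Matrix.sum_apply, Matrix.vecMulVec_apply]

lemma infoMat_mulVec (c : Fin N → Fin K → ℝ) (l : Fin N → ℝ) (x : Fin K → ℝ) :
    infoMat c l *ᵥ x = ∑ i, (l i * (c i ⬝ᵥ x)) • c i := by
  ext j
  simp only [Matrix.mulVec, dotProduct, infoMat_apply, Finset.sum_apply,
    Pi.smul_apply, smul_eq_mul, Finset.sum_mul, Finset.mul_sum]
  rw [Finset.sum_comm]
  exact Finset.sum_congr rfl fun i _ => Finset.sum_congr rfl fun k _ => by ring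

lemma infoMat_quadForm (c : Fin N → Fin K → ℝ) (l : Fin N → ℝ) (x : Fin K → ℝ) :
    x ⬝ᵥ (infoMat c l *ᵥ x) = ∑ i, l i * (c i ⬝ᵥ x) ^ 2 := by
  rw [infoMat_mulVec]
  simp only [dotProduct, Finset.sum_apply, Pi.smul_apply, smul_eq_mul,
    Finset.mul_sum, Finset.sum_mul]
  rw [Finset.sum_comm]
  refine Finset.sum_congr rfl fun i _ => ?_
  rw [sq, Finset.sum_mul_sum, Finset.mul_sum]
  refine Finset.sum_congr rfl fun k _ => ?_
  rw [Finset.mul_sum]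
  exact Finset.sum_congr rfl fun m _ => by ring

lemma infoMat_quad_nonneg (c : Fin N → Fin K → ℝ) {l : Fin N → ℝ} (hl : ∀ i, 0 ≤ l i)
    (x : Fin K → ℝ) : 0 ≤ x ⬝ᵥ (infoMat c l *ᵥ x) := by
  rw [infoMat_quadForm]
  exact Finset.sum_nonneg fun i _ => mul_nonneg (hl i) (sq_nonneg _)

lemma infoMat_isHermitian (c : Fin N → Fin K → ℝ) (l : Fin N → ℝ) :
    Matrix.IsHermitian (infoMat c l) := by
  ext j k
  simp [Matrix.conjTranspose_apply, infoMat_apply]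
  exact Finset.sum_congr rfl fun i _ => by ring

end Aux
section Aux2

lemma regMat_posDef (c : Fin N → Fin K → ℝ) {l : Fin N → ℝ} (hl : ∀ i, 0 ≤ l i)
    {ε : ℝ} (hε : 0 < ε) :
    (infoMat c l + ε • (1 : Matrix (Fin K) (Fin K) ℝ)).PosDef := by
  refine Matrix.posDef_iff_dotProduct_mulVec.mpr ⟨?_, ?_⟩
  · have h1 : (infoMat c l).IsHermitian := infoMat_isHermitian c l
    have h2 : (ε • (1 : Matrix (Fin K) (Fin K) ℝ)).IsHermitian := by
      ext j k
      simp [Matrix.conjTranspose_apply, Matrix.one_apply, eq_comm]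
    exact h1.add h2
  · intro x hx
    have hmv : (infoMat c l + ε • (1 : Matrix (Fin K) (Fin K) ℝ)) *ᵥ x
        = infoMat c l *ᵥ x + ε • x := by
      rw [Matrix.add_mulVec, Matrix.smul_mulVec, Matrix.one_mulVec]
    rw [hmv]
    simp only [star_trivial, dotProduct_add]
    have h3 : 0 < x ⬝ᵥ (ε • x) := by
      have hxx : 0 < x ⬝ᵥ x := by
        rcases Function.ne_iff.mp hx with ⟨j, hj⟩
        have : 0 < x j ^ 2 := pow_two_pos_of_ne_zero hj
        calc (0:ℝ) < x j ^ 2 := this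
        _ ≤ ∑ k, x k * x k := by
            rw [sq]
            exact Finset.single_le_sum (f := fun k => x k * x k)
              (fun k _ => mul_self_nonneg _) (Finset.mem_univ j)
        _ = x ⬝ᵥ x := rfl
      rw [dotProduct_smul]
      exact mul_pos hε hxx
    have := infoMat_quad_nonneg c hl x
    linarith

lemma inv_entry_opt (hK : 0 < K) (c : Fin N → Fin K → ℝ) {l : Fin N → ℝ}
    (hl : ∀ i, 0 ≤ l i) {ε : ℝ} (hε : 0 < ε) :
    ∃ x0 : Fin K → ℝ,
      (infoMat c l + ε • (1 : Matrix (Fin K) (Fin K) ℝ)) *ᵥ x0 = e1 hK ∧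
      x0 ⟨0, hK⟩ = (infoMat c l + ε • (1 : Matrix (Fin K) (Fin K) ℝ))⁻¹ ⟨0, hK⟩ ⟨0, hK⟩ ∧
      ∀ y : Fin K → ℝ,
        2 * y ⟨0, hK⟩ - y ⬝ᵥ ((infoMat c l + ε • (1 : Matrix (Fin K) (Fin K) ℝ)) *ᵥ y)
          ≤ x0 ⟨0, hK⟩ := by
  set A := infoMat c l + ε • (1 : Matrix (Fin K) (Fin K) ℝ) with hA
  have hpd : A.PosDef := regMat_posDef c hl hε
  have hdet : IsUnit A.det := isUnit_iff_ne_zero.mpr (ne_of_gt hpd.det_pos)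
  refine ⟨A⁻¹ *ᵥ e1 hK, ?_, ?_, ?_⟩
  · rw [Matrix.mulVec_mulVec, Matrix.mul_nonsing_inv A hdet, Matrix.one_mulVec]
  · show (A⁻¹ *ᵥ Pi.single ⟨0, hK⟩ 1) ⟨0, hK⟩ = _
    rw [Matrix.mulVec_single]
    simp
  · intro y
    set x0 := A⁻¹ *ᵥ e1 hK with hx0
    have hAx0 : A *ᵥ x0 = e1 hK := by
      rw [hx0, Matrix.mulVec_mulVec, Matrix.mul_nonsing_inv A hdet, Matrix.one_mulVec]
    have hpsd := hpd.posSemidef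
    have key : 0 ≤ (y - x0) ⬝ᵥ (A *ᵥ (y - x0)) := by
      have := hpsd.dotProduct_mulVec_nonneg (y - x0)
      simpa using this
    have hsym : A.IsHermitian := hpd.1
    have hAT : Aᵀ = A := by
      have := hsym
      rwa [Matrix.IsHermitian, Matrix.conjTranspose_eq_transpose_of_trivial] at this
    have cross1 : y ⬝ᵥ (A *ᵥ x0) = y ⟨0, hK⟩ := by
      rw [hAx0]
      show y ⬝ᵥ Pi.single ⟨0, hK⟩ 1 = _
      rw [dotProduct_single]
      ring
    have cross2 : x0 ⬝ᵥ (A *ᵥ y) = y ⟨0, hK⟩ := by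
      rw [Matrix.dotProduct_mulVec, ← Matrix.mulVec_transpose, hAT, hAx0]
      show Pi.single ⟨0, hK⟩ 1 ⬝ᵥ y = _
      rw [single_dotProduct]
      ring
    have hx0A : x0 ⬝ᵥ (A *ᵥ x0) = x0 ⟨0, hK⟩ := by
      rw [hAx0]
      show x0 ⬝ᵥ Pi.single ⟨0, hK⟩ 1 = _
      rw [dotProduct_single]
      ring
    have expand : (y - x0) ⬝ᵥ (A *ᵥ (y - x0))
        = y ⬝ᵥ (A *ᵥ y) - 2 * y ⟨0, hK⟩ + x0 ⟨0, hK⟩ := by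
      rw [Matrix.mulVec_sub, sub_dotProduct, dotProduct_sub,
        dotProduct_sub, cross1, cross2, hx0A]
      ring
    rw [expand] at key
    linarith

end Aux2
section Aux3

lemma reg_quad (c : Fin N → Fin K → ℝ) (l : Fin N → ℝ) (ε : ℝ) (x : Fin K → ℝ) :
    x ⬝ᵥ ((infoMat c l + ε • (1 : Matrix (Fin K) (Fin K) ℝ)) *ᵥ x)
      = x ⬝ᵥ (infoMat c l *ᵥ x) + ε * (x ⬝ᵥ x) := by
  rw [Matrix.add_mulVec, Matrix.smul_mulVec, Matrix.one_mulVec,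
    dotProduct_add, dotProduct_smul]
  simp [smul_eq_mul]

lemma dotProduct_self_nonneg (x : Fin K → ℝ) : 0 ≤ x ⬝ᵥ x :=
  Finset.sum_nonneg fun k _ => mul_self_nonneg _

lemma Vstar_eq_Q (hK : 0 < K) (c : Fin N → Fin K → ℝ) {l : Fin N → ℝ}
    (hl : ∀ i, 0 ≤ l i) :
    Vstar hK c l = ⨆ x : Fin K → ℝ,
      ENNReal.ofReal (2 * x ⟨0, hK⟩ - x ⬝ᵥ (infoMat c l *ᵥ x)) := by
  apply le_antisymm
  · refine iSup₂_le fun ε hε => ?_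
    obtain ⟨x0, hx0e, hx0inv, hbound⟩ := inv_entry_opt hK c hl hε
    rw [← hx0inv]
    have hx0A : x0 ⬝ᵥ ((infoMat c l + ε • (1 : Matrix (Fin K) (Fin K) ℝ)) *ᵥ x0)
        = x0 ⟨0, hK⟩ := by
      rw [hx0e]
      show x0 ⬝ᵥ Pi.single ⟨0, hK⟩ 1 = _
      rw [dotProduct_single]; ring
    have h1 : x0 ⟨0, hK⟩ ≤ 2 * x0 ⟨0, hK⟩ - x0 ⬝ᵥ (infoMat c l *ᵥ x0) := by
      have h2 := reg_quad c l ε x0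
      rw [hx0A] at h2
      have h3 := dotProduct_self_nonneg x0
      nlinarith
    exact le_iSup_of_le x0 (ENNReal.ofReal_le_ofReal h1)
  · refine iSup_le fun x => ?_
    set z : Fin K := ⟨0, hK⟩
    set a : ℝ := 2 * x z - x ⬝ᵥ (infoMat c l *ᵥ x) with ha
    set b : ℝ := x ⬝ᵥ x with hb
    have hbn : 0 ≤ b := dotProduct_self_nonneg x
    have hlim : Tendsto (fun n : ℕ => ENNReal.ofReal (a - (1 / ((n : ℝ) + 1)) * b))
        atTop (𝓝 (ENNReal.ofReal a)) := by
      apply (ENNReal.continuous_ofReal.tendsto a).comp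
      have h0 : Tendsto (fun n : ℕ => (1 / ((n : ℝ) + 1)) * b) atTop (𝓝 0) := by
        simpa using tendsto_one_div_add_atTop_nhds_zero_nat.mul_const b
      have := tendsto_const_nhds (x := a) (f := atTop (α := ℕ)) |>.sub h0
      simpa using this
    refine le_of_tendsto' hlim fun n => ?_
    have hε : (0:ℝ) < 1 / ((n : ℝ) + 1) := by positivity
    obtain ⟨x0, hx0e, hx0inv, hbound⟩ := inv_entry_opt hK c hl hε
    have h1 : a - (1 / ((n : ℝ) + 1)) * b ≤ x0 z := by
      have h2 := hbound x
      rw [reg_quad] at h2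
      rw [ha, hb]
      simp only [z] at h2 ⊢
      linarith
    calc ENNReal.ofReal (a - (1 / ((n : ℝ) + 1)) * b)
        ≤ ENNReal.ofReal (x0 z) := ENNReal.ofReal_le_ofReal h1
      _ = ENNReal.ofReal ((infoMat c l + (1 / ((n : ℝ) + 1)) •
            (1 : Matrix (Fin K) (Fin K) ℝ))⁻¹ ⟨0, hK⟩ ⟨0, hK⟩) := by rw [hx0inv]
      _ ≤ Vstar hK c l := by
          rw [Vstar]
          exact le_iSup₂_of_le (1 / ((n : ℝ) + 1)) hε le_rfl

lemma Q_eq_of_solution (hK : 0 < K) (c : Fin N → Fin K → ℝ) {l : Fin N → ℝ}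
    (hl : ∀ i, 0 ≤ l i) {x : Fin K → ℝ} (hx : infoMat c l *ᵥ x = e1 hK) :
    (⨆ y : Fin K → ℝ, ENNReal.ofReal (2 * y ⟨0, hK⟩ - y ⬝ᵥ (infoMat c l *ᵥ y)))
      = ENNReal.ofReal (x ⟨0, hK⟩) := by
  set M := infoMat c l with hM
  have hxMx : x ⬝ᵥ (M *ᵥ x) = x ⟨0, hK⟩ := by
    rw [hx]
    show x ⬝ᵥ Pi.single ⟨0, hK⟩ 1 = _
    rw [dotProduct_single]; ring
  apply le_antisymm
  · refine iSup_le fun y => ?_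
    apply ENNReal.ofReal_le_ofReal
    have key : 0 ≤ (y - x) ⬝ᵥ (M *ᵥ (y - x)) := infoMat_quad_nonneg c hl _
    have hsym : M.IsHermitian := infoMat_isHermitian c l
    have hMT : Mᵀ = M := by
      have := hsym
      rwa [Matrix.IsHermitian, Matrix.conjTranspose_eq_transpose_of_trivial] at this
    have cross1 : y ⬝ᵥ (M *ᵥ x) = y ⟨0, hK⟩ := by
      rw [hx]
      show y ⬝ᵥ Pi.single ⟨0, hK⟩ 1 = _
      rw [dotProduct_single]; ring
    have cross2 : x ⬝ᵥ (M *ᵥ y) = y ⟨0, hK⟩ := by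
      rw [Matrix.dotProduct_mulVec, ← Matrix.mulVec_transpose, hMT, hx]
      show Pi.single ⟨0, hK⟩ 1 ⬝ᵥ y = _
      rw [single_dotProduct]; ring
    have expand : (y - x) ⬝ᵥ (M *ᵥ (y - x))
        = y ⬝ᵥ (M *ᵥ y) - 2 * y ⟨0, hK⟩ + x ⟨0, hK⟩ := by
      rw [Matrix.mulVec_sub, sub_dotProduct, dotProduct_sub,
        dotProduct_sub, cross1, cross2, hxMx]
      ring
    rw [expand] at key
    linarith
  · refine le_iSup_of_le x ?_
    apply ENNReal.ofReal_le_ofReal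
    rw [hxMx]
    linarith

lemma Q_eq_top_of_sep (hK : 0 < K) (c : Fin N → Fin K → ℝ) (l : Fin N → ℝ)
    {z : Fin K → ℝ} (hz1 : z ⟨0, hK⟩ = 1) (hz2 : ∀ i, l i ≠ 0 → c i ⬝ᵥ z = 0) :
    (⨆ y : Fin K → ℝ, ENNReal.ofReal (2 * y ⟨0, hK⟩ - y ⬝ᵥ (infoMat c l *ᵥ y))) = ⊤ := by
  rw [eq_top_iff, ← ENNReal.iSup_natCast]
  refine iSup_le fun n => ?_
  refine le_iSup_of_le ((n : ℝ) • z) ?_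
  have hq : ((n : ℝ) • z) ⬝ᵥ (infoMat c l *ᵥ ((n : ℝ) • z)) = 0 := by
    rw [infoMat_quadForm]
    apply Finset.sum_eq_zero
    intro i _
    by_cases h : l i = 0
    · simp [h]
    · have : c i ⬝ᵥ ((n : ℝ) • z) = (n : ℝ) * (c i ⬝ᵥ z) := dotProduct_smul _ _ _
      rw [this, hz2 i h]
      simp
  rw [hq]
  have : ((n : ℝ) • z) ⟨0, hK⟩ = (n : ℝ) := by simp [hz1]
  rw [this]
  calc ((n : ℕ) : ENNReal) = ENNReal.ofReal n := by
        rw [ENNReal.ofReal_natCast]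
    _ ≤ ENNReal.ofReal (2 * (n : ℝ) - 0) := by
        apply ENNReal.ofReal_le_ofReal
        have : (0:ℝ) ≤ n := Nat.cast_nonneg n
        linarith
  
end Aux3
section Aux4

lemma sum_smul_mem_span (c : Fin N → Fin K → ℝ) (T : Finset (Fin N)) (β : Fin N → ℝ)
    (h : ∀ i ∉ T, β i = 0) :
    ∑ i, β i • c i ∈ Submodule.span ℝ (c '' ↑T) := by
  apply Submodule.sum_mem
  intro i _
  by_cases hi : i ∈ T
  · exact Submodule.smul_mem _ _ (Submodule.subset_span ⟨i, hi, rfl⟩)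
  · rw [h i hi, zero_smul]
    exact Submodule.zero_mem _

lemma spanning_of_rep (hK : 0 < K) (c : Fin N → Fin K → ℝ) {T : Finset (Fin N)}
    {β : Fin N → ℝ} (h : IsRep hK c T β) : Spanning hK c T := by
  rw [Spanning, ← h.2]
  exact sum_smul_mem_span c T β h.1

lemma exists_isRep (hK : 0 < K) (c : Fin N → Fin K → ℝ) {S : Finset (Fin N)}
    (hS : Spanning hK c S) : ∃ β, IsRep hK c S β := by
  classical
  rw [Spanning, Set.image_eq_range, Submodule.mem_span_range_iff_exists_fun] at hS
  obtain ⟨f, hf⟩ := hS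
  set β : Fin N → ℝ := fun i => if h : i ∈ S then f ⟨i, Finset.mem_coe.mpr h⟩ else 0 with hβ
  refine ⟨β, fun i hi => dif_neg hi, ?_⟩
  rw [← hf]
  have h2 : ∀ i : (↑S : Set (Fin N)), f i • c ↑i = β ↑i • c ↑i := by
    rintro ⟨i, hi⟩
    have hi' : i ∈ S := Finset.mem_coe.mp hi
    simp only [hβ, dif_pos hi']
  calc ∑ i, β i • c i = ∑ i ∈ S, β i • c i := by
        refine (Finset.sum_subset (Finset.subset_univ S) fun i _ hi => ?_).symm
        simp only [hβ, dif_neg hi, zero_smul]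
    _ = ∑ i : (↑S : Set (Fin N)), β ↑i • c ↑i :=
        (Finset.sum_finset_coe (fun i => β i • c i) S).symm
    _ = ∑ i : (↑S : Set (Fin N)), f i • c ↑i := by
        exact Finset.sum_congr rfl fun i _ => (h2 i).symm

lemma e1_ne_zero (hK : 0 < K) : e1 hK ≠ 0 := by
  intro h
  have : e1 hK ⟨0, hK⟩ = 0 := by rw [h]; rfl
  rw [e1, Pi.single_eq_same] at this
  exact one_ne_zero this

lemma minSpanning_indep (hK : 0 < K) (c : Fin N → Fin K → ℝ) {S : Finset (Fin N)}
    (hS : MinSpanning hK c S) (γ : Fin N → ℝ) (hsupp : ∀ i ∉ S, γ i = 0)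
    (hsum : ∑ i, γ i • c i = 0) : γ = 0 := by
  by_contra hne
  obtain ⟨j, hj⟩ := Function.ne_iff.mp hne
  simp only [Pi.zero_apply] at hj
  have hjS : j ∈ S := by
    by_contra h
    exact hj (hsupp j h)
  obtain ⟨β, hβ⟩ := exists_isRep hK c hS.1
  set β' : Fin N → ℝ := fun i => β i - (β j / γ j) * γ i with hβ'
  have hsum' : ∑ i, β' i • c i = e1 hK := by
    simp only [hβ', sub_smul]
    rw [Finset.sum_sub_distrib, hβ.2]
    have : ∑ i, ((β j / γ j) * γ i) • c i = (β j / γ j) • ∑ i, γ i • c i := by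
      rw [Finset.smul_sum]
      exact Finset.sum_congr rfl fun i _ => by rw [smul_smul]
    rw [this, hsum, smul_zero, sub_zero]
  have hrep' : IsRep hK c (S.erase j) β' := by
    constructor
    · intro i hi
      by_cases hij : i = j
      · subst hij
        simp only [hβ']
        rw [div_mul_cancel₀ (β i) hj, sub_self]
      · have hiS : i ∉ S := fun h => hi (Finset.mem_erase.mpr ⟨hij, h⟩)
        simp [hβ', hβ.1 i hiS, hsupp i hiS]
    · exact hsum'
  have := hS.2 (S.erase j) (Finset.erase_ssubset hjS)
  exact this (spanning_of_rep hK c hrep')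

end Aux4
section Aux5

lemma isRep_unique (hK : 0 < K) (c : Fin N → Fin K → ℝ) {S : Finset (Fin N)}
    (hS : MinSpanning hK c S) {β β' : Fin N → ℝ}
    (h1 : IsRep hK c S β) (h2 : IsRep hK c S β') : β = β' := by
  have h := minSpanning_indep hK c hS (β - β')
    (fun i hi => by simp [h1.1 i hi, h2.1 i hi])
    (by
      simp only [Pi.sub_apply, sub_smul]
      rw [Finset.sum_sub_distrib, h1.2, h2.2, sub_self])
  funext i
  have := congrFun h i
  simpa [sub_eq_zero] using this

lemma betaVec_isRep (hK : 0 < K) (c : Fin N → Fin K → ℝ) {S : Finset (Fin N)}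
    (hS : Spanning hK c S) : IsRep hK c S (betaVec hK c S) := by
  have h : ∃ β, IsRep hK c S β := exists_isRep hK c hS
  rw [betaVec, dif_pos h]
  exact h.choose_spec

lemma betaVec_ne_zero (hK : 0 < K) (c : Fin N → Fin K → ℝ) {S : Finset (Fin N)}
    (hS : MinSpanning hK c S) {j : Fin N} (hj : j ∈ S) : betaVec hK c S j ≠ 0 := by
  intro h0
  have hβ := betaVec_isRep hK c hS.1
  have hrep' : IsRep hK c (S.erase j) (betaVec hK c S) := by
    constructor
    · intro i hi
      by_cases hij : i = j
      · rw [hij]; exact h0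
      · exact hβ.1 i fun h => hi (Finset.mem_erase.mpr ⟨hij, h⟩)
    · exact hβ.2
  exact hS.2 (S.erase j) (Finset.erase_ssubset hj) (spanning_of_rep hK c hrep')

lemma minSpanning_nonempty (hK : 0 < K) (c : Fin N → Fin K → ℝ) {S : Finset (Fin N)}
    (hS : MinSpanning hK c S) : S.Nonempty := by
  rcases S.eq_empty_or_nonempty with h | h
  · exfalso
    have := hS.1
    rw [Spanning, h] at this
    simp only [Finset.coe_empty, Set.image_empty, Submodule.span_empty,
      Submodule.mem_bot] at this
    exact e1_ne_zero hK this
  · exact h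

lemma phi_nonneg (hK : 0 < K) (c : Fin N → Fin K → ℝ) (S : Finset (Fin N)) :
    0 ≤ phi hK c S := Finset.sum_nonneg fun i _ => abs_nonneg _

lemma phi_pos (hK : 0 < K) (c : Fin N → Fin K → ℝ) {S : Finset (Fin N)}
    (hS : MinSpanning hK c S) : 0 < phi hK c S := by
  obtain ⟨j, hj⟩ := minSpanning_nonempty hK c hS
  have h1 : 0 < |betaVec hK c S j| := abs_pos.mpr (betaVec_ne_zero hK c hS hj)
  exact lt_of_lt_of_le h1 (Finset.single_le_sum (f := fun i => |betaVec hK c S i|)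
    (fun i _ => abs_nonneg _) (Finset.mem_univ j))

lemma freq_nonneg (hK : 0 < K) (c : Fin N → Fin K → ℝ) (S : Finset (Fin N)) :
    ∀ i, 0 ≤ freq hK c S i := fun i =>
  div_nonneg (abs_nonneg _) (phi_nonneg hK c S)

lemma freq_sum (hK : 0 < K) (c : Fin N → Fin K → ℝ) {S : Finset (Fin N)}
    (hS : MinSpanning hK c S) : ∑ i, freq hK c S i = 1 := by
  unfold freq
  rw [← Finset.sum_div]
  exact div_self (ne_of_gt (phi_pos hK c hS))

lemma freq_ne_zero_iff (hK : 0 < K) (c : Fin N → Fin K → ℝ) {S : Finset (Fin N)}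
    (hS : MinSpanning hK c S) (i : Fin N) : freq hK c S i ≠ 0 ↔ i ∈ S := by
  unfold freq
  constructor
  · intro h
    by_contra hi
    rw [(betaVec_isRep hK c hS.1).1 i hi] at h
    simp at h
  · intro h
    have h1 := betaVec_ne_zero hK c hS h
    have h2 := ne_of_gt (phi_pos hK c hS)
    positivity

lemma dual_to_vec (f : Module.Dual ℝ (Fin K → ℝ)) (y : Fin K → ℝ) :
    f y = y ⬝ᵥ (fun j => f (Pi.single j 1)) := by
  have hy : y = ∑ j, y j • (Pi.single j (1:ℝ) : Fin K → ℝ) := by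
    funext k
    rw [Finset.sum_apply]
    simp [Pi.single_apply, eq_comm]
  conv_lhs => rw [hy]
  rw [map_sum]
  simp only [_root_.map_smul, smul_eq_mul]
  rfl

lemma exists_sep (hK : 0 < K) (c : Fin N → Fin K → ℝ) (l : Fin N → ℝ)
    (hmem : e1 hK ∉ Submodule.span ℝ (c '' {i | l i ≠ 0})) :
    ∃ zz : Fin K → ℝ, zz ⟨0, hK⟩ = 1 ∧ ∀ i, l i ≠ 0 → c i ⬝ᵥ zz = 0 := by
  obtain ⟨f, hf1, hf2⟩ := Submodule.exists_dual_map_eq_bot_of_notMem hmem inferInstance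
  refine ⟨(f (e1 hK))⁻¹ • (fun j => f (Pi.single j 1)), ?_, ?_⟩
  · show (f (e1 hK))⁻¹ * f (Pi.single ⟨0, hK⟩ 1) = 1
    have : Pi.single (⟨0, hK⟩ : Fin K) (1:ℝ) = e1 hK := rfl
    rw [this]
    exact inv_mul_cancel₀ hf1
  · intro i hi
    have hci : c i ∈ Submodule.span ℝ (c '' {i | l i ≠ 0}) :=
      Submodule.subset_span ⟨i, hi, rfl⟩
    have hfc : f (c i) = 0 := by
      have hmap : f (c i) ∈ Submodule.map f (Submodule.span ℝ (c '' {i | l i ≠ 0})) :=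
        ⟨c i, hci, rfl⟩
      rw [hf2] at hmap
      simpa using hmap
    rw [dotProduct_smul, ← dual_to_vec f (c i), hfc]
    simp

lemma exists_solution (hK : 0 < K) (c : Fin N → Fin K → ℝ) {l : Fin N → ℝ}
    (hl : ∀ i, 0 ≤ l i)
    (hmem : e1 hK ∈ Submodule.span ℝ (c '' {i | l i ≠ 0})) :
    ∃ x, infoMat c l *ᵥ x = e1 hK := by
  by_contra h
  push_neg at h
  have hnm : e1 hK ∉ LinearMap.range (infoMat c l).mulVecLin := by
    rintro ⟨x, hx⟩
    exact h x hx
  obtain ⟨f, hf1, hf2⟩ := Submodule.exists_dual_map_eq_bot_of_notMem hnm inferInstance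
  set zz : Fin K → ℝ := fun j => f (Pi.single j 1) with hzz
  have hvan : ∀ x, f (infoMat c l *ᵥ x) = 0 := by
    intro x
    have hmap : f (infoMat c l *ᵥ x) ∈
        Submodule.map f (LinearMap.range (infoMat c l).mulVecLin) :=
      ⟨infoMat c l *ᵥ x, ⟨x, rfl⟩, rfl⟩
    rw [hf2] at hmap
    simpa using hmap
  have h1 : zz ⬝ᵥ (infoMat c l *ᵥ zz) = 0 := by
    rw [dotProduct_comm, ← dual_to_vec f (infoMat c l *ᵥ zz)]
    exact hvan zz
  have h2 : ∀ i, l i ≠ 0 → c i ⬝ᵥ zz = 0 := by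
    rw [infoMat_quadForm] at h1
    intro i hi
    have hterm : ∀ j ∈ Finset.univ, 0 ≤ l j * (c j ⬝ᵥ zz) ^ 2 :=
      fun j _ => mul_nonneg (hl j) (sq_nonneg _)
    have := (Finset.sum_eq_zero_iff_of_nonneg hterm).mp h1 i (Finset.mem_univ i)
    have hsq : (c i ⬝ᵥ zz) ^ 2 = 0 := by
      rcases mul_eq_zero.mp this with h | h
      · exact absurd h hi
      · exact h
    exact pow_eq_zero_iff (n := 2) (by norm_num) |>.mp hsq
  have hker : Submodule.span ℝ (c '' {i | l i ≠ 0}) ≤ LinearMap.ker f := by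
    rw [Submodule.span_le]
    rintro v ⟨i, hi, rfl⟩
    simp only [SetLike.mem_coe, LinearMap.mem_ker]
    rw [dual_to_vec f (c i)]
    exact h2 i hi
  exact hf1 (hker hmem)

end Aux5
section Aux6

/-- directional derivative of the ℓ¹ norm at `β` in direction `γ` (when no kink). -/
def dval (β γ : Fin N → ℝ) : ℝ := ∑ i, (if β i < 0 then -γ i else γ i)

lemma dval_neg (β γ : Fin N → ℝ) : dval β (-γ) = -dval β γ := by
  unfold dval
  rw [← Finset.sum_neg_distrib]
  refine Finset.sum_congr rfl fun i _ => ?_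
  by_cases h : β i < 0 <;> simp [h]

lemma step {β γ : Fin N → ℝ} (hγ : γ ≠ 0) (hsupp : ∀ i, β i = 0 → γ i = 0)
    (hd : dval β γ ≤ 0) :
    ∃ s : ℝ, 0 < s ∧ ∃ j, β j ≠ 0 ∧ β j + s * γ j = 0 ∧
      (∀ i, β i = 0 → β i + s * γ i = 0) ∧
      ∑ i, |β i + s * γ i| = ∑ i, |β i| + s * dval β γ := by
  classical
  set Jp := Finset.univ.filter (fun j => β j * γ j < 0) with hJp
  have hne : Jp.Nonempty := by
    by_contra hne
    rw [Finset.not_nonempty_iff_eq_empty] at hne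
    have hprod : ∀ j, 0 ≤ β j * γ j := by
      intro j
      by_contra hj
      push_neg at hj
      have : j ∈ Jp := by simp [hJp, hj]
      rw [hne] at this
      exact absurd this (Finset.notMem_empty j)
    have hterm : ∀ j, 0 ≤ (if β j < 0 then -γ j else γ j) := by
      intro j
      by_cases hγj : γ j = 0
      · simp [hγj]
      · have hβj : β j ≠ 0 := fun h => hγj (hsupp j h)
        have hp : 0 < β j * γ j := lt_of_le_of_ne (hprod j)
          (fun h => hγj (by rcases mul_eq_zero.mp h.symm with h' | h'
                            exacts [absurd h' hβj, h']))
        by_cases hb : β j < 0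
        · have : γ j < 0 := by nlinarith
          simp [hb]; linarith
        · simp [hb]
          push_neg at hb
          nlinarith
    obtain ⟨j₁, hj₁⟩ := Function.ne_iff.mp hγ
    simp only [Pi.zero_apply] at hj₁
    have hβj₁ : β j₁ ≠ 0 := fun h => hj₁ (hsupp j₁ h)
    have hp : 0 < β j₁ * γ j₁ := lt_of_le_of_ne (hprod j₁)
      (fun h => hj₁ (by rcases mul_eq_zero.mp h.symm with h' | h'
                        exacts [absurd h' hβj₁, h']))
    have hpos : 0 < (if β j₁ < 0 then -γ j₁ else γ j₁) := by
      by_cases hb : β j₁ < 0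
      · have : γ j₁ < 0 := by nlinarith
        simp [hb]; linarith
      · rw [if_neg hb]
        push_neg at hb
        nlinarith
    have : 0 < dval β γ := Finset.sum_pos' (fun j _ => hterm j) ⟨j₁, Finset.mem_univ j₁, hpos⟩
    linarith
  obtain ⟨j₀, hj₀, hmin⟩ := Finset.exists_min_image Jp (fun j => -β j / γ j) hne
  have hj₀p : β j₀ * γ j₀ < 0 := by
    have := hj₀
    simp [hJp] at this
    exact this
  have hγj₀ : γ j₀ ≠ 0 := fun h => by rw [h, mul_zero] at hj₀p; exact lt_irrefl 0 hj₀p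
  have hβj₀ : β j₀ ≠ 0 := fun h => by rw [h, zero_mul] at hj₀p; exact lt_irrefl 0 hj₀p
  set s := -β j₀ / γ j₀ with hs
  have hspos : 0 < s := by
    rcases lt_or_gt_of_ne hγj₀ with hγn | hγp
    · have hβp : 0 < β j₀ := by nlinarith
      rw [hs]
      exact div_pos_of_neg_of_neg (by linarith) hγn
    · have hβn : β j₀ < 0 := by nlinarith
      rw [hs]
      exact div_pos (by linarith) hγp
  have hminle : ∀ j, β j * γ j < 0 → s ≤ -β j / γ j := by
    intro j hj
    exact hmin j (by simp [hJp, hj])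
  have hptwise : ∀ i, |β i + s * γ i| = |β i| + s * (if β i < 0 then -γ i else γ i) := by
    intro i
    by_cases hγi : γ i = 0
    · simp [hγi]
    · have hβi : β i ≠ 0 := fun h => hγi (hsupp i h)
      by_cases hb : β i < 0
      · -- need β i + s γ i ≤ 0
        have hle : β i + s * γ i ≤ 0 := by
          rcases le_or_gt (γ i) 0 with hγ0 | hγ0
          · nlinarith
          · have hij : β i * γ i < 0 := mul_neg_of_neg_of_pos hb hγ0
            have h1 := hminle i hij
            have h2 : (-β i / γ i) * γ i = -β i := div_mul_cancel₀ _ (ne_of_gt hγ0)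
            nlinarith [mul_le_mul_of_nonneg_right h1 (le_of_lt hγ0)]
        rw [abs_of_nonpos hle, abs_of_neg hb, if_pos hb]
        ring
      · push_neg at hb
        have hbp : 0 < β i := lt_of_le_of_ne hb (Ne.symm hβi)
        have hge : 0 ≤ β i + s * γ i := by
          rcases le_or_gt 0 (γ i) with hγ0 | hγ0
          · nlinarith
          · have hij : β i * γ i < 0 := mul_neg_of_pos_of_neg hbp hγ0
            have h1 := hminle i hij
            have h2 : (-β i / γ i) * γ i = -β i := div_mul_cancel₀ _ (ne_of_lt hγ0)
            nlinarith [mul_le_mul_of_nonpos_right h1 (le_of_lt hγ0)]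
        rw [abs_of_nonneg hge, abs_of_pos hbp, if_neg (not_lt.mpr hb)]
  refine ⟨s, hspos, j₀, hβj₀, ?_, fun i h => by rw [h, hsupp i h]; ring, ?_⟩
  · rw [hs, div_mul_cancel₀ _ hγj₀]
    ring
  · rw [Finset.sum_congr rfl fun i _ => hptwise i, Finset.sum_add_distrib, ← Finset.mul_sum]
    rfl

lemma key_aux (hK : 0 < K) (c : Fin N → Fin K → ℝ) {Sstar : Finset (Fin N)}
    (hUM : UniqueMin hK c Sstar) :
    ∀ n : ℕ, ∀ β : Fin N → ℝ, (Finset.univ.filter fun i => β i ≠ 0).card ≤ n →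
      (∑ i, β i • c i = e1 hK) →
      phi hK c Sstar ≤ ∑ i, |β i| ∧
        (∑ i, |β i| = phi hK c Sstar → β = betaVec hK c Sstar) := by
  classical
  intro n
  induction n with
  | zero =>
    intro β hcard hβ
    exfalso
    have hempty : (Finset.univ.filter fun i => β i ≠ 0) = ∅ :=
      Finset.card_eq_zero.mp (le_antisymm hcard (Nat.zero_le _))
    have hβ0 : ∀ i, β i = 0 := by
      intro i
      by_contra h
      have : i ∈ (Finset.univ.filter fun i => β i ≠ 0) := by simp [h]
      rw [hempty] at this
      exact absurd this (Finset.notMem_empty i)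
    apply e1_ne_zero hK
    rw [← hβ]
    exact Finset.sum_eq_zero fun i _ => by rw [hβ0 i, zero_smul]
  | succ n IH =>
    intro β hcard hβ
    set T := Finset.univ.filter (fun i => β i ≠ 0) with hT
    by_cases hind : ∀ γ : Fin N → ℝ, (∀ i ∉ T, γ i = 0) → ∑ i, γ i • c i = 0 → γ = 0
    · -- independent support case
      have hrep : IsRep hK c T β := ⟨fun i hi => by simpa [hT] using hi, hβ⟩
      have hms : MinSpanning hK c T := by
        refine ⟨spanning_of_rep hK c hrep, ?_⟩
        intro T' hT' hsp'
        obtain ⟨β'', hβ''⟩ := exists_isRep hK c hsp'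
        have hrep'' : IsRep hK c T β'' :=
          ⟨fun i hi => hβ''.1 i fun h => hi (hT'.subset h), hβ''.2⟩
        have heq : β = β'' := by
          have h0 := hind (β - β'')
            (fun i hi => by simp [hrep.1 i hi, hrep''.1 i hi])
            (by
              simp only [Pi.sub_apply, sub_smul]
              rw [Finset.sum_sub_distrib, hβ, hβ''.2, sub_self])
          funext i
          have := congrFun h0 i
          simpa [sub_eq_zero] using this
        obtain ⟨j, hjT, hjT'⟩ := Finset.exists_of_ssubset hT'
        have hj : β j ≠ 0 := by simpa [hT] using hjT
        rw [heq] at hj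
        exact hj (hβ''.1 j hjT')
      have hβeq : β = betaVec hK c T := isRep_unique hK c hms hrep (betaVec_isRep hK c hms.1)
      have hsum : ∑ i, |β i| = phi hK c T := by rw [hβeq]; rfl
      by_cases hTS : T = Sstar
      · rw [hTS] at hsum hβeq
        exact ⟨le_of_eq hsum.symm, fun _ => hβeq⟩
      · have hlt := hUM.2 T hms hTS
        refine ⟨by rw [hsum]; exact le_of_lt hlt, fun h => ?_⟩
        rw [hsum] at h
        exact absurd h.symm (ne_of_lt hlt)
    · -- dependent support case
      push_neg at hind
      obtain ⟨γ₀, hγ₀supp, hγ₀sum, hγ₀ne⟩ := hind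
      obtain ⟨γ, hγne, hγsupp, hγsum, hdle⟩ :
          ∃ γ : Fin N → ℝ, γ ≠ 0 ∧ (∀ i, β i = 0 → γ i = 0) ∧
            (∑ i, γ i • c i = 0) ∧ dval β γ ≤ 0 := by
        have hsupp0 : ∀ i, β i = 0 → γ₀ i = 0 := fun i h =>
          hγ₀supp i (by simp [hT, h])
        by_cases hd : dval β γ₀ ≤ 0
        · exact ⟨γ₀, hγ₀ne, hsupp0, hγ₀sum, hd⟩
        · refine ⟨-γ₀, neg_ne_zero.mpr hγ₀ne, fun i h => by rw [Pi.neg_apply, hsupp0 i h, neg_zero], ?_, ?_⟩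
          · simp only [Pi.neg_apply, neg_smul]
            rw [Finset.sum_neg_distrib, hγ₀sum, neg_zero]
          · rw [dval_neg]
            linarith
      obtain ⟨s, hs, j₀, hj₀ne, hj₀zero, hzero, hsumeq⟩ := step hγne hγsupp hdle
      set β₂ : Fin N → ℝ := fun i => β i + s * γ i with hβ₂
      have hβ₂rep : ∑ i, β₂ i • c i = e1 hK := by
        simp only [hβ₂, add_smul]
        rw [Finset.sum_add_distrib, hβ]
        have h5 : ∑ i, (s * γ i) • c i = s • ∑ i, γ i • c i := by
          rw [Finset.smul_sum]
          exact Finset.sum_congr rfl fun i _ => (smul_smul s (γ i) (c i)).symm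
        rw [h5, hγsum, smul_zero, add_zero]
      have hj₀T : j₀ ∈ T := by simp [hT, hj₀ne]
      have hsubset : (Finset.univ.filter fun i => β₂ i ≠ 0) ⊆ T.erase j₀ := by
        intro i hi
        simp only [Finset.mem_filter, Finset.mem_univ, true_and] at hi
        refine Finset.mem_erase.mpr ⟨fun h => ?_, ?_⟩
        · rw [h] at hi
          exact hi hj₀zero
        · by_contra h
          have hβi : β i = 0 := by simpa [hT] using h
          exact hi (hzero i hβi)
      have hcard₂ : (Finset.univ.filter fun i => β₂ i ≠ 0).card ≤ n := by
        have h1 := Finset.card_le_card hsubset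
        rw [Finset.card_erase_of_mem hj₀T] at h1
        omega
      obtain ⟨hIH1, hIH2⟩ := IH β₂ hcard₂ hβ₂rep
      have hle : ∑ i, |β₂ i| ≤ ∑ i, |β i| := by
        rw [hsumeq]
        nlinarith
      constructor
      · exact le_trans hIH1 hle
      · intro heq
        exfalso
        have h1 : ∑ i, |β₂ i| = ∑ i, |β i| := le_antisymm hle (by rw [heq]; exact hIH1)
        have hd0 : dval β γ = 0 := by
          rw [hsumeq] at h1
          have : s * dval β γ = 0 := by linarith
          rcases mul_eq_zero.mp this with h | h
          · exact absurd h (ne_of_gt hs)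
          · exact h
        have hβ₂star : β₂ = betaVec hK c Sstar := hIH2 (h1.trans heq)
        -- opposite direction
        have hdneg : dval β (-γ) ≤ 0 := by rw [dval_neg, hd0, neg_zero]
        have hγnegne : (-γ) ≠ 0 := neg_ne_zero.mpr hγne
        have hsuppneg : ∀ i, β i = 0 → (-γ) i = 0 := fun i h => by
          rw [Pi.neg_apply, hγsupp i h, neg_zero]
        obtain ⟨s', hs', j₁, hj₁ne, hj₁zero, hzero', hsumeq'⟩ := step hγnegne hsuppneg hdneg
        set β₃ : Fin N → ℝ := fun i => β i + s' * (-γ) i with hβ₃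
        have hβ₃rep : ∑ i, β₃ i • c i = e1 hK := by
          simp only [hβ₃, add_smul]
          rw [Finset.sum_add_distrib, hβ]
          have hγsumneg : ∑ i, (-γ) i • c i = 0 := by
            simp only [Pi.neg_apply, neg_smul]
            rw [Finset.sum_neg_distrib, hγsum, neg_zero]
          have h5 : ∑ i, (s' * (-γ) i) • c i = s' • ∑ i, (-γ) i • c i := by
            rw [Finset.smul_sum]
            exact Finset.sum_congr rfl fun i _ => (smul_smul s' ((-γ) i) (c i)).symm
          rw [h5, hγsumneg, smul_zero, add_zero]
        have hj₁T : j₁ ∈ T := by simp [hT, hj₁ne]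
        have hsubset' : (Finset.univ.filter fun i => β₃ i ≠ 0) ⊆ T.erase j₁ := by
          intro i hi
          simp only [Finset.mem_filter, Finset.mem_univ, true_and] at hi
          refine Finset.mem_erase.mpr ⟨fun h => ?_, ?_⟩
          · rw [h] at hi
            exact hi hj₁zero
          · by_contra h
            have hβi : β i = 0 := by simpa [hT] using h
            exact hi (hzero' i hβi)
        have hcard₃ : (Finset.univ.filter fun i => β₃ i ≠ 0).card ≤ n := by
          have h1 := Finset.card_le_card hsubset'
          rw [Finset.card_erase_of_mem hj₁T] at h1
          omega
        have h3 : ∑ i, |β₃ i| = ∑ i, |β i| := by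
          rw [hsumeq', dval_neg, hd0]
          ring
        have hβ₃star : β₃ = betaVec hK c Sstar := (IH β₃ hcard₃ hβ₃rep).2 (h3.trans heq)
        apply hγne
        funext i
        have hi := congrFun (hβ₂star.trans hβ₃star.symm) i
        simp only [hβ₂, hβ₃, Pi.neg_apply] at hi
        have h6 : (s + s') * γ i = 0 := by ring_nf; nlinarith [hi]
        rcases mul_eq_zero.mp h6 with h | h
        · linarith
        · exact h

end Aux6
section Aux7

lemma main_bound (hK : 0 < K) (c : Fin N → Fin K → ℝ) {Sstar : Finset (Fin N)}
    (hUM : UniqueMin hK c Sstar) {l : Fin N → ℝ} (hl : ∀ i, 0 ≤ l i)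
    (hsum1 : ∑ i, l i = 1) {x : Fin K → ℝ} (hx : infoMat c l *ᵥ x = e1 hK) :
    phi hK c Sstar ^ 2 ≤ x ⟨0, hK⟩ ∧
      (x ⟨0, hK⟩ = phi hK c Sstar ^ 2 → l = freq hK c Sstar) := by
  classical
  set t : Fin N → ℝ := fun i => c i ⬝ᵥ x with ht
  set b : Fin N → ℝ := fun i => l i * t i with hb
  have hbrep : ∑ i, b i • c i = e1 hK := by
    rw [← hx, infoMat_mulVec c l x]
  have hkey := key_aux hK c hUM N b
    (le_trans (Finset.card_filter_le _ _) (by simp)) hbrep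
  set m : ℝ := ∑ i, |b i| with hm
  have hφpos : 0 < phi hK c Sstar := phi_pos hK c hUM.1
  have hφm : phi hK c Sstar ≤ m := hkey.1
  have hxz : x ⟨0, hK⟩ = ∑ i, l i * t i ^ 2 := by
    have h1 : x ⬝ᵥ (infoMat c l *ᵥ x) = x ⟨0, hK⟩ := by
      rw [hx]
      show x ⬝ᵥ Pi.single ⟨0, hK⟩ 1 = _
      rw [dotProduct_single]; ring
    rw [← h1, infoMat_quadForm]
  have hm' : ∑ i, l i * |t i| = m := by
    rw [hm]
    exact Finset.sum_congr rfl fun i _ => by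
      rw [hb]
      simp only []
      rw [abs_mul, abs_of_nonneg (hl i)]
  have hvar : ∑ i, l i * t i ^ 2 = m ^ 2 + ∑ i, l i * (|t i| - m) ^ 2 := by
    have hpt : ∀ i ∈ Finset.univ, l i * (|t i| - m) ^ 2
        = l i * t i ^ 2 - 2 * m * (l i * |t i|) + m ^ 2 * l i := by
      intro i _
      have habs : |t i| ^ 2 = t i ^ 2 := sq_abs _
      rw [← habs]
      ring
    rw [Finset.sum_congr rfl hpt, Finset.sum_add_distrib, Finset.sum_sub_distrib,
      ← Finset.mul_sum, ← Finset.mul_sum, hm', hsum1]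
    ring
  have hVnn : 0 ≤ ∑ i, l i * (|t i| - m) ^ 2 :=
    Finset.sum_nonneg fun i _ => mul_nonneg (hl i) (sq_nonneg _)
  have hm2 : phi hK c Sstar ^ 2 ≤ m ^ 2 :=
    pow_le_pow_left₀ (le_of_lt hφpos) hφm 2
  constructor
  · rw [hxz, hvar]
    linarith
  · intro heq
    rw [hxz, hvar] at heq
    have hmeq : m = phi hK c Sstar := by nlinarith
    have hV0 : ∑ i, l i * (|t i| - m) ^ 2 = 0 := by nlinarith
    have hbeq : b = betaVec hK c Sstar := hkey.2 hmeq
    have hti : ∀ i, l i ≠ 0 → |t i| = m := by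
      intro i hi
      have h0 := (Finset.sum_eq_zero_iff_of_nonneg
        (fun j _ => mul_nonneg (hl j) (sq_nonneg _))).mp hV0 i (Finset.mem_univ i)
      rcases mul_eq_zero.mp h0 with h | h
      · exact absurd h hi
      · have := pow_eq_zero_iff (n := 2) (by norm_num) |>.mp h
        linarith [this]
    funext i
    unfold freq
    rw [← hbeq]
    by_cases hi : l i = 0
    · rw [hi, hb]
      simp [hi]
    · rw [hb]
      simp only []
      rw [abs_mul, abs_of_nonneg (hl i), hti i hi, hmeq]
      field_simp
  
lemma upper_bound_at_freq (hK : 0 < K) (c : Fin N → Fin K → ℝ) {Sstar : Finset (Fin N)}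
    (hMS : MinSpanning hK c Sstar) (y : Fin K → ℝ) :
    2 * y ⟨0, hK⟩ - y ⬝ᵥ (infoMat c (freq hK c Sstar) *ᵥ y) ≤ phi hK c Sstar ^ 2 := by
  set φv := phi hK c Sstar with hφv
  set β := betaVec hK c Sstar with hβdef
  have hφ : 0 < φv := phi_pos hK c hMS
  have hyz : y ⟨0, hK⟩ = ∑ i, β i * (c i ⬝ᵥ y) := by
    have h1 : e1 hK ⬝ᵥ y = y ⟨0, hK⟩ := by
      show Pi.single ⟨0, hK⟩ 1 ⬝ᵥ y = _
      rw [single_dotProduct]; ring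
    rw [← h1, ← (betaVec_isRep hK c hMS.1).2]
    simp only [dotProduct, Finset.sum_apply, Pi.smul_apply, smul_eq_mul,
      Finset.sum_mul]
    rw [Finset.sum_comm]
    refine Finset.sum_congr rfl fun i _ => ?_
    rw [Finset.mul_sum]
    exact Finset.sum_congr rfl fun k _ => by ring
  rw [infoMat_quadForm, hyz]
  have hpt : ∀ i ∈ Finset.univ, 2 * (β i * (c i ⬝ᵥ y))
      ≤ freq hK c Sstar i * (c i ⬝ᵥ y) ^ 2 + |β i| * φv := by
    intro i _
    set s := c i ⬝ᵥ y
    have hfr : freq hK c Sstar i = |β i| / φv := rfl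
    have h2 : 2 * (β i * s) * φv ≤ |β i| * s ^ 2 + |β i| * φv ^ 2 := by
      rcases lt_trichotomy (β i) 0 with h | h | h
      · rw [abs_of_neg h]
        nlinarith [mul_nonneg (neg_nonneg.mpr h.le) (sq_nonneg (s + φv))]
      · simp [h]
      · rw [abs_of_pos h]
        nlinarith [mul_nonneg h.le (sq_nonneg (s - φv))]
    have heq : freq hK c Sstar i * s ^ 2 + |β i| * φv - 2 * (β i * s)
        = (|β i| * s ^ 2 + |β i| * φv ^ 2 - 2 * (β i * s) * φv) / φv := by
      rw [hfr]
      field_simp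
    have h3 : 0 ≤ (|β i| * s ^ 2 + |β i| * φv ^ 2 - 2 * (β i * s) * φv) / φv :=
      div_nonneg (by linarith) hφ.le
    linarith [heq ▸ h3]
  have hsum := Finset.sum_le_sum hpt
  rw [Finset.sum_add_distrib, ← Finset.sum_mul, ← Finset.mul_sum] at hsum
  have hphi : ∑ i, |β i| = φv := rfl
  rw [hphi] at hsum
  nlinarith [hsum]

end Aux7

/-- Under Unique Minimizer, `V*(λ*) = φ(S*)²` and `V*(λ) > φ(S*)²` for
every other `λ` in the simplex: `λ*` is the unique minimizer of `V*` on the simplex. -/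
theorem Vstar_unique_minimizer {K N : ℕ} (hK : 0 < K) (hN : 0 < N)
    (c : Fin N → Fin K → ℝ) (Sstar : Finset (Fin N))
    (hspan : Spanning hK c Finset.univ) (hUM : UniqueMin hK c Sstar) :
    Vstar hK c (freq hK c Sstar) = ENNReal.ofReal ((phi hK c Sstar) ^ 2) ∧
    ∀ l : Fin N → ℝ, (∀ i, 0 ≤ l i) → (∑ i, l i) = 1 → l ≠ freq hK c Sstar →
      ENNReal.ofReal ((phi hK c Sstar) ^ 2) < Vstar hK c l := by
  classical
  have hMS := hUM.1
  have hφ : 0 < phi hK c Sstar := phi_pos hK c hMS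
  have hlpos := freq_nonneg hK c Sstar
  have hlsum := freq_sum hK c hMS
  have hmem : e1 hK ∈ Submodule.span ℝ (c '' {i | freq hK c Sstar i ≠ 0}) := by
    have hset : {i | freq hK c Sstar i ≠ 0} = ↑Sstar := Set.ext fun i => by
      simpa using freq_ne_zero_iff hK c hMS i
    rw [hset]
    exact hMS.1
  obtain ⟨x, hx⟩ := exists_solution hK c hlpos hmem
  obtain ⟨hlow, heqcase⟩ := main_bound hK c hUM hlpos hlsum hx
  have hup : x ⟨0, hK⟩ ≤ phi hK c Sstar ^ 2 := by
    have h1 := upper_bound_at_freq hK c hMS x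
    have h2 : x ⬝ᵥ (infoMat c (freq hK c Sstar) *ᵥ x) = x ⟨0, hK⟩ := by
      rw [hx]
      show x ⬝ᵥ Pi.single ⟨0, hK⟩ 1 = _
      rw [dotProduct_single]; ring
    rw [h2] at h1
    linarith
  have hxval : x ⟨0, hK⟩ = phi hK c Sstar ^ 2 := le_antisymm hup hlow
  constructor
  · rw [Vstar_eq_Q hK c hlpos, Q_eq_of_solution hK c hlpos hx, hxval]
  · intro l hl hsum hne
    by_cases hsp : e1 hK ∈ Submodule.span ℝ (c '' {i | l i ≠ 0})
    · obtain ⟨x', hx'⟩ := exists_solution hK c hl hsp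
      obtain ⟨hlow', heq'⟩ := main_bound hK c hUM hl hsum hx'
      have hstrict : phi hK c Sstar ^ 2 < x' ⟨0, hK⟩ :=
        lt_of_le_of_ne hlow' fun h => hne (heq' h.symm)
      rw [Vstar_eq_Q hK c hl, Q_eq_of_solution hK c hl hx']
      rw [ENNReal.ofReal_lt_ofReal_iff (by nlinarith)]
      exact hstrict
    · obtain ⟨zz, hzz1, hzz2⟩ := exists_sep hK c l hsp
      rw [Vstar_eq_Q hK c hl, Q_eq_top_of_sep hK c l hzz1 hzz2]
      exact ENNReal.ofReal_lt_top

end LearningTraps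
end
end

section
/- Let β ∈ ℝ^N satisfy Σᵢ βᵢ·cᵢ = e₁, set φ := Σᵢ |βᵢ| and λ ∈ [0,∞)^N with λᵢ := |βᵢ|/φ. Fix a positive definite prior Σ⁰ and write V := V_{Σ⁰}. Then for every q ∈ [0,∞)^N and every s ≥ 0, 1/V(q + s·λ) ≥ 1/V(q) + s/φ². In particular (with β = β^{S*} under the Unique Minimizer assumption, so λ = λ* and φ = φ(S*)), the directional derivative of V at q along λ* satisfies |∂_{λ*}V(q)| ≥ V(q)²/φ(S*)². -/
open Matrix Finset Filter Topology

noncomputable section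

namespace LearningTraps

variable {K N : ℕ}

/-! ### Auxiliary lemmas for STATEMENT 19 -/

section Aux19

lemma aux_sum_mulVec {ι : Type*} (s : Finset ι) (M : ι → Matrix (Fin K) (Fin K) ℝ)
    (x : Fin K → ℝ) : (∑ i ∈ s, M i) *ᵥ x = ∑ i ∈ s, (M i) *ᵥ x := by
  ext j
  simp [Matrix.mulVec, dotProduct, Matrix.sum_apply, Finset.sum_mul, Finset.sum_apply]
  exact Finset.sum_comm

lemma aux_dotProduct_sum {ι : Type*} (s : Finset ι) (x : Fin K → ℝ) (y : ι → Fin K → ℝ) :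
    x ⬝ᵥ (∑ i ∈ s, y i) = ∑ i ∈ s, x ⬝ᵥ y i := by
  simp [dotProduct, Finset.mul_sum, Finset.sum_apply]
  exact Finset.sum_comm

lemma aux_sum_dotProduct {ι : Type*} (s : Finset ι) (y : ι → Fin K → ℝ) (x : Fin K → ℝ) :
    (∑ i ∈ s, y i) ⬝ᵥ x = ∑ i ∈ s, y i ⬝ᵥ x := by
  simp [dotProduct, Finset.sum_mul, Finset.sum_apply]
  exact Finset.sum_comm

lemma aux_vecMulVec_quad (v x : Fin K → ℝ) :
    x ⬝ᵥ (Matrix.vecMulVec v v) *ᵥ x = (v ⬝ᵥ x) ^ 2 := by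
  have h : (Matrix.vecMulVec v v) *ᵥ x = (v ⬝ᵥ x) • v := by
    ext j
    simp [Matrix.mulVec, Matrix.vecMulVec_apply, dotProduct, Finset.mul_sum, mul_assoc,
      mul_comm, mul_left_comm]
  rw [h, dotProduct_smul, smul_eq_mul, dotProduct_comm]
  ring

lemma infoMat_quad (c : Fin N → Fin K → ℝ) (q : Fin N → ℝ) (x : Fin K → ℝ) :
    x ⬝ᵥ (infoMat c q) *ᵥ x = ∑ i, q i * (c i ⬝ᵥ x) ^ 2 := by
  rw [infoMat, aux_sum_mulVec, aux_dotProduct_sum]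
  refine Finset.sum_congr rfl fun i _ => ?_
  rw [smul_mulVec, dotProduct_smul, smul_eq_mul, aux_vecMulVec_quad]

lemma infoMat_herm (c : Fin N → Fin K → ℝ) (q : Fin N → ℝ) : (infoMat c q).IsHermitian := by
  unfold Matrix.IsHermitian infoMat
  ext j k
  simp [Matrix.conjTranspose_apply, Matrix.sum_apply, Matrix.vecMulVec_apply, mul_comm,
    mul_left_comm]

lemma infoMat_posSemidef (c : Fin N → Fin K → ℝ) {q : Fin N → ℝ} (hq : ∀ i, 0 ≤ q i) :
    (infoMat c q).PosSemidef := by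
  refine Matrix.PosSemidef.of_dotProduct_mulVec_nonneg (infoMat_herm c q) fun x => ?_
  rw [star_trivial, infoMat_quad]
  exact Finset.sum_nonneg fun i _ => mul_nonneg (hq i) (sq_nonneg _)

lemma infoMat_add (c : Fin N → Fin K → ℝ) (p r : Fin N → ℝ) :
    infoMat c (p + r) = infoMat c p + infoMat c r := by
  simp [infoMat, add_smul, Finset.sum_add_distrib]

lemma infoMat_smul (c : Fin N → Fin K → ℝ) (s : ℝ) (p : Fin N → ℝ) :
    infoMat c (s • p) = s • infoMat c p := by
  simp [infoMat, smul_smul, Finset.smul_sum]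

lemma aux_psd_symm {M : Matrix (Fin K) (Fin K) ℝ} (hM : M.IsHermitian) (x y : Fin K → ℝ) :
    y ⬝ᵥ M *ᵥ x = x ⬝ᵥ M *ᵥ y := by
  have ht : Mᵀ = M := by
    ext i j
    simpa [Matrix.conjTranspose_apply] using congrFun (congrFun hM i) j
  rw [Matrix.dotProduct_mulVec, ← Matrix.mulVec_transpose, ht, dotProduct_comm]

lemma aux_psd_cauchy {M : Matrix (Fin K) (Fin K) ℝ} (hM : M.PosSemidef) (x y : Fin K → ℝ) :
    (x ⬝ᵥ M *ᵥ y) ^ 2 ≤ (x ⬝ᵥ M *ᵥ x) * (y ⬝ᵥ M *ᵥ y) := by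
  have key : ∀ t : ℝ, 0 ≤ (y ⬝ᵥ M *ᵥ y) * (t * t) + (2 * (x ⬝ᵥ M *ᵥ y)) * t + (x ⬝ᵥ M *ᵥ x) := by
    intro t
    have h0 := hM.dotProduct_mulVec_nonneg (x + t • y)
    rw [star_trivial] at h0
    have hexp : (x + t • y) ⬝ᵥ M *ᵥ (x + t • y)
        = (x ⬝ᵥ M *ᵥ x) + t * (x ⬝ᵥ M *ᵥ y) + t * (y ⬝ᵥ M *ᵥ x) + t ^ 2 * (y ⬝ᵥ M *ᵥ y) := by
      simp only [Matrix.mulVec_add, Matrix.mulVec_smul, add_dotProduct, smul_dotProduct,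
        dotProduct_add, dotProduct_smul, smul_eq_mul]
      ring
    rw [hexp, aux_psd_symm hM.1 x y] at h0
    nlinarith [h0]
  have hd := discrim_le_zero key
  rw [discrim] at hd
  nlinarith [hd]

lemma aux_posDef_diag {M : Matrix (Fin K) (Fin K) ℝ} (hM : M.PosDef) (i : Fin K) : 0 < M i i := by
  have h := hM.dotProduct_mulVec_pos (x := Pi.single i 1) (by
    intro h
    have := congrFun h i
    simp at this)
  rw [star_trivial] at h
  simpa using h

lemma aux_precision_lb {A P : Matrix (Fin K) (Fin K) ℝ} (hK : 0 < K)
    (hA : A.PosDef) (hP : P.PosSemidef) {r : ℝ}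
    (hr : ∀ x : Fin K → ℝ, x ⟨0, hK⟩ = 1 → r ≤ x ⬝ᵥ P *ᵥ x) :
    1 / (A⁻¹ ⟨0, hK⟩ ⟨0, hK⟩) + r ≤ 1 / ((A + P)⁻¹ ⟨0, hK⟩ ⟨0, hK⟩) := by
  set i0 : Fin K := ⟨0, hK⟩
  set e : Fin K → ℝ := Pi.single i0 1 with he
  have hB : (A + P).PosDef := hA.add_posSemidef hP
  have hBinv : (A + P)⁻¹.PosDef := hB.inv
  have hAinv : A⁻¹.PosDef := hA.inv
  set a : ℝ := A⁻¹ i0 i0 with ha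
  set v : ℝ := (A + P)⁻¹ i0 i0 with hv
  have hapos : 0 < a := aux_posDef_diag hAinv i0
  have hvpos : 0 < v := aux_posDef_diag hBinv i0
  set w : Fin K → ℝ := (A + P)⁻¹ *ᵥ e with hw
  have hw0 : w i0 = v := by simp [hw, he, hv]
  set x : Fin K → ℝ := v⁻¹ • w with hx
  have hx0 : x i0 = 1 := by
    simp [hx, hw0, inv_mul_cancel₀ hvpos.ne']
  have hBw : (A + P) *ᵥ w = e := by
    rw [hw, Matrix.mulVec_mulVec, Matrix.mul_nonsing_inv _ (isUnit_iff_ne_zero.2 hB.det_pos.ne'),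
      Matrix.one_mulVec]
  have hxBx : x ⬝ᵥ (A + P) *ᵥ x = 1 / v := by
    rw [hx, Matrix.mulVec_smul, hBw, dotProduct_smul, smul_dotProduct]
    have : w ⬝ᵥ e = v := by simp [he, hw0]
    rw [smul_eq_mul, smul_eq_mul, this]
    field_simp
  set y : Fin K → ℝ := A⁻¹ *ᵥ e with hy
  have hAy : A *ᵥ y = e := by
    rw [hy, Matrix.mulVec_mulVec, Matrix.mul_nonsing_inv _ (isUnit_iff_ne_zero.2 hA.det_pos.ne'),
      Matrix.one_mulVec]
  have hyAy : y ⬝ᵥ A *ᵥ y = a := by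
    rw [hAy]; simp [he, hy, ha]
  have hxAy : x ⬝ᵥ A *ᵥ y = 1 := by
    rw [hAy]; simp [he, hx0]
  have hcs := aux_psd_cauchy hA.posSemidef x y
  rw [hxAy, hyAy] at hcs
  have hxAx : 1 / a ≤ x ⬝ᵥ A *ᵥ x := by
    rw [div_le_iff₀ hapos]
    nlinarith [hcs]
  have hxPx := hr x hx0
  have hfin : 1 / a + r ≤ x ⬝ᵥ (A + P) *ᵥ x := by
    rw [Matrix.add_mulVec, dotProduct_add]
    exact add_le_add hxAx hxPx
  rw [hxBx] at hfin
  exact hfin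

lemma aux_phi_pos (hK : 0 < K) {c : Fin N → Fin K → ℝ} {β : Fin N → ℝ}
    (hβ : (∑ i, β i • c i) = e1 hK) : 0 < ∑ j, |β j| := by
  rcases (Finset.sum_nonneg fun j _ => abs_nonneg (β j)).lt_or_eq with h | h
  · exact h
  · exfalso
    have hz : ∀ j ∈ Finset.univ, |β j| = 0 :=
      (Finset.sum_eq_zero_iff_of_nonneg fun j _ => abs_nonneg (β j)).1 h.symm
    have hb : ∀ j, β j = 0 := fun j => abs_eq_zero.1 (hz j (Finset.mem_univ j))
    have := congrFun hβ ⟨0, hK⟩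
    simp [hb, e1] at this

lemma aux_dir_lb (hK : 0 < K) {c : Fin N → Fin K → ℝ} {β : Fin N → ℝ}
    (hβ : (∑ i, β i • c i) = e1 hK) (x : Fin K → ℝ) (hx : x ⟨0, hK⟩ = 1) :
    1 / (∑ j, |β j|) ^ 2 ≤ ∑ i, (|β i| / ∑ j, |β j|) * (c i ⬝ᵥ x) ^ 2 := by
  set φ : ℝ := ∑ j, |β j| with hφdef
  have hφ : 0 < φ := aux_phi_pos hK hβ
  have hone : (∑ i, β i * (c i ⬝ᵥ x)) = 1 := by
    have := congrArg (fun v => v ⬝ᵥ x) hβ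
    simpa [aux_sum_dotProduct, smul_dotProduct, smul_eq_mul, e1, single_dotProduct,
      hx] using this
  set S : ℝ := ∑ i, |β i| * (c i ⬝ᵥ x) ^ 2 with hS
  have habs : (1 : ℝ) ≤ ∑ i, |β i| * |c i ⬝ᵥ x| := by
    calc (1 : ℝ) = |∑ i, β i * (c i ⬝ᵥ x)| := by rw [hone]; norm_num
    _ ≤ ∑ i, |β i * (c i ⬝ᵥ x)| := Finset.abs_sum_le_sum_abs _ _
    _ = ∑ i, |β i| * |c i ⬝ᵥ x| := by simp [abs_mul]
  have hcs : (∑ i, |β i| * |c i ⬝ᵥ x|) ^ 2 ≤ φ * S := by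
    have h := Finset.sum_mul_sq_le_sq_mul_sq Finset.univ
      (fun i => Real.sqrt |β i|) (fun i => Real.sqrt |β i| * |c i ⬝ᵥ x|)
    have e1' : ∀ i : Fin N, Real.sqrt |β i| * (Real.sqrt |β i| * |c i ⬝ᵥ x|)
        = |β i| * |c i ⬝ᵥ x| := by
      intro i; rw [← mul_assoc, Real.mul_self_sqrt (abs_nonneg _)]
    have e2 : ∀ i : Fin N, Real.sqrt |β i| ^ 2 = |β i| := fun i =>
      Real.sq_sqrt (abs_nonneg _)
    have e3 : ∀ i : Fin N, (Real.sqrt |β i| * |c i ⬝ᵥ x|) ^ 2 = |β i| * (c i ⬝ᵥ x) ^ 2 := by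
      intro i; rw [mul_pow, e2, sq_abs]
    simp only [e1', e2, e3] at h
    exact h
  have hS1 : 1 / φ ≤ S := by
    rw [div_le_iff₀ hφ]
    nlinarith [habs, hcs, Finset.sum_nonneg (fun i (_ : i ∈ Finset.univ) =>
      mul_nonneg (abs_nonneg (β i)) (abs_nonneg (c i ⬝ᵥ x)))]
  have hrw : ∑ i, (|β i| / φ) * (c i ⬝ᵥ x) ^ 2 = S / φ := by
    rw [hS, Finset.sum_div]
    exact Finset.sum_congr rfl fun i _ => by ring
  rw [hrw]
  have h2 : (1 : ℝ) / φ ^ 2 = (1 / φ) / φ := by ring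
  rw [h2]
  gcongr

lemma postVar_pos (hK : 0 < K) (c : Fin N → Fin K → ℝ)
    {Cov : Matrix (Fin K) (Fin K) ℝ} (hCov : Cov.PosDef) {q : Fin N → ℝ}
    (hq : ∀ i, 0 ≤ q i) : 0 < postVar hK c Cov q :=
  aux_posDef_diag (hCov.inv.add_posSemidef (infoMat_posSemidef c hq)).inv _

lemma aux_part1 (hK : 0 < K) (c : Fin N → Fin K → ℝ) (β : Fin N → ℝ)
    (hβ : (∑ i, β i • c i) = e1 hK)
    (Cov : Matrix (Fin K) (Fin K) ℝ) (hCov : Cov.PosDef)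
    (q : Fin N → ℝ) (hq : ∀ i, 0 ≤ q i) (s : ℝ) (hs : 0 ≤ s) :
    1 / postVar hK c Cov q + s / (∑ j, |β j|) ^ 2 ≤
      1 / postVar hK c Cov (q + s • fun i => |β i| / ∑ j, |β j|) := by
  set φ : ℝ := ∑ j, |β j| with hφdef
  set lv : Fin N → ℝ := fun i => |β i| / φ with hlv
  have hlam : ∀ i, 0 ≤ lv i := fun i =>
    div_nonneg (abs_nonneg _) (Finset.sum_nonneg fun j _ => abs_nonneg _)
  set A : Matrix (Fin K) (Fin K) ℝ := Cov⁻¹ + infoMat c q with hAdef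
  have hA : A.PosDef := hCov.inv.add_posSemidef (infoMat_posSemidef c hq)
  set P : Matrix (Fin K) (Fin K) ℝ := infoMat c (s • lv) with hPdef
  have hP : P.PosSemidef := infoMat_posSemidef c fun i => by
    simpa using mul_nonneg hs (hlam i)
  have hmat : Cov⁻¹ + infoMat c (q + s • lv) = A + P := by
    rw [infoMat_add, hAdef, hPdef, add_assoc]
  have hr : ∀ x : Fin K → ℝ, x ⟨0, hK⟩ = 1 → s / φ ^ 2 ≤ x ⬝ᵥ P *ᵥ x := by
    intro x hx
    rw [hPdef, infoMat_quad]
    have hsum : ∑ i, (s • lv) i * (c i ⬝ᵥ x) ^ 2 = s * ∑ i, lv i * (c i ⬝ᵥ x) ^ 2 := by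
      rw [Finset.mul_sum]
      exact Finset.sum_congr rfl fun i _ => by simp [mul_assoc]
    rw [hsum]
    have := aux_dir_lb hK hβ x hx
    calc s / φ ^ 2 = s * (1 / φ ^ 2) := by ring
    _ ≤ s * ∑ i, lv i * (c i ⬝ᵥ x) ^ 2 := by
        exact mul_le_mul_of_nonneg_left this hs
  have hmain := aux_precision_lb hK hA hP hr
  show 1 / ((Cov⁻¹ + infoMat c q)⁻¹ ⟨0, hK⟩ ⟨0, hK⟩) + s / φ ^ 2 ≤
      1 / ((Cov⁻¹ + infoMat c (q + s • lv))⁻¹ ⟨0, hK⟩ ⟨0, hK⟩)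
  rw [hmat]
  exact hmain

lemma aux_diff_det {M : ℝ → Matrix (Fin K) (Fin K) ℝ} {t : ℝ}
    (h : ∀ i j, DifferentiableAt ℝ (fun s => M s i j) t) :
    DifferentiableAt ℝ (fun s => (M s).det) t := by
  simp only [Matrix.det_apply']
  exact DifferentiableAt.fun_sum fun σ _ =>
    (DifferentiableAt.fun_finsetProd fun i _ => h (σ i) i).const_mul _

lemma aux_diff_adjugate {M : ℝ → Matrix (Fin K) (Fin K) ℝ} {t : ℝ} (i j : Fin K)
    (h : ∀ i j, DifferentiableAt ℝ (fun s => M s i j) t) :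
    DifferentiableAt ℝ (fun s => (M s).adjugate i j) t := by
  simp only [Matrix.adjugate_apply]
  apply aux_diff_det
  intro a b
  simp only [Matrix.updateRow_apply]
  by_cases hab : a = j
  · simp only [if_pos hab]
    exact differentiableAt_const _
  · simp only [if_neg hab]
    exact h a b

end Aux19

/-- Sampling along the frequency direction `λᵢ = |βᵢ|/φ` of a representation
`Σᵢ βᵢcᵢ = e₁` increases posterior precision at rate at least `1/φ²`; in particular the
directional derivative of `V` along `λ` satisfies `|∂_λ V(q)| ≥ V(q)²/φ²`. -/
theorem precision_increase_along_freq {K N : ℕ} (hK : 0 < K) (hN : 0 < N)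
    (c : Fin N → Fin K → ℝ) (β : Fin N → ℝ) (hβ : (∑ i, β i • c i) = e1 hK)
    (Cov : Matrix (Fin K) (Fin K) ℝ) (hCov : Cov.PosDef) :
    (∀ q : Fin N → ℝ, (∀ i, 0 ≤ q i) → ∀ s : ℝ, 0 ≤ s →
      1 / postVar hK c Cov (q + s • fun i => |β i| / ∑ j, |β j|) ≥
        1 / postVar hK c Cov q + s / (∑ j, |β j|) ^ 2) ∧
    (∀ q : Fin N → ℝ, (∀ i, 0 ≤ q i) →
      (postVar hK c Cov q) ^ 2 / (∑ j, |β j|) ^ 2 ≤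
        abs (lineDeriv ℝ (postVar hK c Cov) q fun i => |β i| / ∑ j, |β j|)) := by
  classical
  set φ : ℝ := ∑ j, |β j| with hφdef
  have hφ : 0 < φ := aux_phi_pos hK hβ
  set lv : Fin N → ℝ := fun i => |β i| / φ with hlv
  have hlam : ∀ i, 0 ≤ lv i := fun i => div_nonneg (abs_nonneg _) hφ.le
  constructor
  · intro q hq s hs
    exact aux_part1 hK c β hβ Cov hCov q hq s hs
  · intro q hq
    set i0 : Fin K := ⟨0, hK⟩
    set A : Matrix (Fin K) (Fin K) ℝ := Cov⁻¹ + infoMat c q with hAdef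
    have hA : A.PosDef := hCov.inv.add_posSemidef (infoMat_posSemidef c hq)
    set P : Matrix (Fin K) (Fin K) ℝ := infoMat c lv with hPdef
    set g : ℝ → ℝ := fun t => postVar hK c Cov (q + t • lv) with hgdef
    set a : ℝ := postVar hK c Cov q with hadef
    have hapos : 0 < a := postVar_pos hK c hCov hq
    -- rewrite g as quotient of differentiable functions
    have hgfun : g = fun t => ((A + t • P).adjugate i0 i0) / ((A + t • P).det) := by
      funext t
      have hmat : Cov⁻¹ + infoMat c (q + t • lv) = A + t • P := by
        rw [infoMat_add, infoMat_smul, hAdef, hPdef, add_assoc]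
      show (Cov⁻¹ + infoMat c (q + t • lv))⁻¹ i0 i0 = _
      rw [hmat, Matrix.inv_def, Ring.inverse_eq_inv, Matrix.smul_apply, smul_eq_mul,
        inv_mul_eq_div]
    have hent : ∀ i j : Fin K, DifferentiableAt ℝ (fun s => (A + s • P) i j) (0 : ℝ) := by
      intro i j
      have : (fun s : ℝ => (A + s • P) i j) = fun s : ℝ => A i j + s * P i j := by
        funext s
        simp [Matrix.add_apply, Matrix.smul_apply]
      rw [this]
      exact (differentiableAt_id.mul_const _).const_add _
    have hdet0 : (A + (0 : ℝ) • P).det ≠ 0 := by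
      rw [zero_smul, add_zero]
      exact hA.det_pos.ne'
    have hgdiff : DifferentiableAt ℝ g 0 := by
      rw [hgfun]
      exact (aux_diff_adjugate i0 i0 hent).div (aux_diff_det hent) hdet0
    set d : ℝ := deriv g 0 with hddef
    have hd : HasDerivAt g d 0 := hgdiff.hasDerivAt
    have hline : lineDeriv ℝ (postVar hK c Cov) q lv = d :=
      HasLineDerivAt.lineDeriv (hd : HasLineDerivAt ℝ (postVar hK c Cov) d q lv)
    have hg0 : g 0 = a := by
      rw [hgdef]
      simp only [zero_smul, add_zero]
      rfl
    -- slope bound on the right of 0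
    set F : ℝ → ℝ := fun s => -(a ^ 2) / (φ ^ 2 + s * a) with hFdef
    have hev : ∀ s ∈ Set.Ioi (0 : ℝ), slope g 0 s ≤ F s := by
      intro s hs
      have hspos : (0 : ℝ) < s := hs
      have hq' : ∀ i, 0 ≤ (q + s • lv) i := fun i => by
        have := mul_nonneg hspos.le (hlam i)
        simpa using add_nonneg (hq i) this
      have hgs : 0 < g s := postVar_pos hK c hCov hq'
      have h1 := aux_part1 hK c β hβ Cov hCov q hq s hspos.le
      have h1' : g s * (φ ^ 2 + s * a) ≤ a * φ ^ 2 := by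
        rw [div_add_div _ _ hapos.ne' (pow_ne_zero 2 hφ.ne'),
          div_le_div_iff₀ (by positivity) hgs] at h1
        nlinarith [h1]
      rw [slope_def_field, hg0, sub_zero]
      rw [div_le_div_iff₀ hspos (by positivity)]
      nlinarith [h1']
    have hevF : ∀ᶠ s in 𝓝[>] (0 : ℝ), slope g 0 s ≤ F s :=
      eventually_nhdsWithin_of_forall hev
    have htends : Tendsto (slope g 0) (𝓝[>] (0 : ℝ)) (𝓝 d) :=
      (hasDerivAt_iff_tendsto_slope.1 hd).mono_left
        (nhdsWithin_mono 0 fun x hx => by simpa using (ne_of_gt hx))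
    have hFcont : ContinuousAt F 0 := by
      apply ContinuousAt.div continuousAt_const
      · exact continuousAt_const.add (continuousAt_id.mul continuousAt_const)
      · simpa using (pow_ne_zero 2 hφ.ne')
    have hF0 : F 0 = -(a ^ 2) / φ ^ 2 := by simp [hFdef]
    have hFt : Tendsto F (𝓝[>] (0 : ℝ)) (𝓝 (-(a ^ 2) / φ ^ 2)) := by
      rw [← hF0]
      exact hFcont.tendsto.mono_left nhdsWithin_le_nhds
    have hdle : d ≤ -(a ^ 2) / φ ^ 2 := le_of_tendsto_of_tendsto htends hFt hevF
    rw [hline]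
    have h1 : a ^ 2 / φ ^ 2 ≤ -d := by
      have : -(a ^ 2) / φ ^ 2 = -(a ^ 2 / φ ^ 2) := by ring
      rw [this] at hdle
      linarith
    exact h1.trans (neg_le_abs d)

end LearningTraps
end
end
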